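/- Let h: [1,infinity) -> R be twice differentiable on (1,infinity), satisfying (1-y) h''(y) = (1 - c - (1-y)/y) h'(y) for y > 1 with h(1) = 1, h(y) -> 0 as y -> infinity, and h' continuous. Then h(x) = (1/B(c,1-c)) * int_0^{1/x} (1-z)^{c-1} z^{-c} dz for all x >= 1. -/

import Mathlib

open MeasureTheory Real Set Filter

lemma beta_integrable {c : ℝ} (hc0 : 0 < c) (hc1 : c < 1) :
    IntervalIntegrable (fun z : ℝ => (1 - z) ^ (c - 1) * z ^ (-c)) volume 0 1 := by
  have h1 : IntervalIntegrable (fun z : ℝ => (1 - z) ^ (c - 1) * z ^ (-c)) volume 0 (1/2) := by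
    have hi : IntervalIntegrable (fun z : ℝ => z ^ (-c)) volume 0 (1/2) :=
      intervalIntegral.intervalIntegrable_rpow' (by linarith)
    refine hi.continuousOn_mul ?_
    refine (continuousOn_const.sub continuousOn_id).rpow_const fun x hx => ?_
    left
    rw [Set.uIcc_of_le (by norm_num)] at hx
    have : (x:ℝ) ≤ 1/2 := hx.2
    simp only [Pi.sub_apply, id]
    intro hh
    nlinarith [hx.1]
  have h2 : IntervalIntegrable (fun z : ℝ => (1 - z) ^ (c - 1) * z ^ (-c)) volume (1/2) 1 := by
    have hi : IntervalIntegrable (fun z : ℝ => z ^ (c-1)) volume 0 (1/2) :=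
      intervalIntegral.intervalIntegrable_rpow' (by linarith)
    have hi2 := hi.comp_sub_left 1
    norm_num at hi2
    refine hi2.symm.mul_continuousOn ?_
    refine (continuousOn_id.rpow_const fun x hx => ?_)
    left
    rw [Set.uIcc_of_le (by norm_num)] at hx
    simp only [id]
    intro hh
    rw [hh] at hx
    norm_num at hx
  exact h1.trans h2

lemma beta_value {c : ℝ} (hc0 : 0 < c) (hc1 : c < 1) :
    ∫ z in (0:ℝ)..1, (1 - z) ^ (c - 1) * z ^ (-c) = Real.Gamma c * Real.Gamma (1 - c) := by
  have hG := Complex.Gamma_mul_Gamma_eq_betaIntegral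
    (s := (1 - c : ℝ)) (t := (c : ℝ)) (by simp; linarith) (by simpa using hc0)
  rw [show ((1-c:ℝ):ℂ) + (c:ℂ) = 1 by push_cast; ring, Complex.Gamma_one, one_mul] at hG
  rw [Complex.betaIntegral] at hG
  have key : (∫ x in (0:ℝ)..1, (x:ℂ) ^ (((1-c:ℝ):ℂ) - 1) * (1 - (x:ℂ)) ^ ((c:ℂ) - 1))
      = ((∫ z in (0:ℝ)..1, (1 - z) ^ (c - 1) * z ^ (-c) : ℝ) : ℂ) := by
    rw [← intervalIntegral.integral_ofReal]
    refine intervalIntegral.integral_congr fun x hx => ?_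
    rw [Set.uIcc_of_le (by norm_num)] at hx
    rw [show (((1-c:ℝ):ℂ) - 1) = ((-c:ℝ):ℂ) by push_cast; ring,
      show ((c:ℂ) - 1) = ((c-1:ℝ):ℂ) by push_cast; ring,
      show (1 - (x:ℂ)) = ((1-x:ℝ):ℂ) by push_cast; ring,
      ← Complex.ofReal_cpow hx.1, ← Complex.ofReal_cpow (by linarith [hx.2])]
    push_cast
    ring
  rw [key] at hG
  rw [Complex.Gamma_ofReal, Complex.Gamma_ofReal, ← Complex.ofReal_mul] at hG
  have := Complex.ofReal_injective hG
  rw [← this]; ring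

theorem stmt_6 (c : ℝ) (hc0 : 0 < c) (hc1 : c < 1)
    (h h' h'' : ℝ → ℝ)
    (hderiv : ∀ y > 1, HasDerivAt h (h' y) y)
    (hderiv2 : ∀ y > 1, HasDerivAt h' (h'' y) y)
    (h'cont : ContinuousOn h' (Set.Ioi 1))
    (hcont : ContinuousOn h (Set.Ici 1))
    (hODE : ∀ y > 1, (1 - y) * h'' y = (1 - c - (1 - y) / y) * h' y)
    (hinit : h 1 = 1)
    (hlim : Tendsto h atTop (nhds 0)) :
    ∀ x ≥ 1, h x =
      (1 / (Real.Gamma c * Real.Gamma (1 - c))) *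
        ∫ z in Set.Ioo (0 : ℝ) (1 / x), (1 - z) ^ (c - 1) * z ^ (-c) := by
  -- Step 1: solve the ODE for h'
  set K : ℝ := 2 * h' 2 with hKdef
  have hK : ∀ y ∈ Set.Ioi (1:ℝ), h' y = K * ((y-1) ^ (c-1) / y) := by
    set φ : ℝ → ℝ := fun y => h' y * (y * (y-1) ^ (1-c)) with hφ
    have hφd : ∀ y ∈ Set.Ioi (1:ℝ), HasDerivAt φ 0 y := by
      intro y hy
      rw [Set.mem_Ioi] at hy
      have hy1 : (0:ℝ) < y - 1 := by linarith
      have hy0 : y ≠ 0 := by positivity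
      have hd1 : HasDerivAt (fun t : ℝ => (t-1) ^ (1-c)) ((1-c) * (y-1) ^ (-c)) y := by
        have := (Real.hasDerivAt_rpow_const (x := y - 1) (p := 1-c) (Or.inl hy1.ne')).comp y
          ((hasDerivAt_id y).sub_const 1)
        simpa [Function.comp_def, show 1-c-1 = -c by ring] using this
      have hd2 : HasDerivAt (fun t : ℝ => t * (t-1) ^ (1-c))
          (1 * (y-1) ^ (1-c) + y * ((1-c) * (y-1) ^ (-c))) y :=
        (hasDerivAt_id y).mul hd1
      have hd3 := (hderiv2 y hy).mul hd2
      have goal0 : h'' y * (y * (y-1) ^ (1-c)) +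
          h' y * (1 * (y-1) ^ (1-c) + y * ((1-c) * (y-1) ^ (-c))) = 0 := by
        have hsplit : (y-1) ^ (1-c) = (y-1) * (y-1) ^ (-c) := by
          rw [show (1-c) = 1 + (-c) by ring, Real.rpow_add hy1, Real.rpow_one]
        set q := (y-1) ^ (-c) with hq
        rw [hsplit]
        have h0 := hODE y hy
        have h2 : (1-y) * h'' y * y = ((1-c) * y - (1-y)) * h' y := by
          rw [h0]
          field_simp
        linear_combination (-q) * h2
      exact goal0 ▸ hd3
    have const : ∀ a b : ℝ, 1 < a → a < b → φ a = φ b := by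
      intro a b ha hab
      obtain ⟨ξ, hξ, hs⟩ := exists_hasDerivAt_eq_slope φ (fun _ => 0) hab
        (fun t ht => (hφd t (lt_of_lt_of_le ha ht.1)).continuousAt.continuousWithinAt)
        (fun t ht => hφd t (ha.trans ht.1))
      have hba : b - a ≠ 0 := by linarith
      field_simp at hs
      linarith
    have hφ2 : φ 2 = 2 * h' 2 := by simp only [hφ]; norm_num; ring
    intro y hy
    rw [Set.mem_Ioi] at hy
    have hy1 : (0:ℝ) < y - 1 := by linarith
    have hφy : φ y = 2 * h' 2 := by
      rcases lt_trichotomy y 2 with h2 | h2 | h2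
      · rw [← hφ2]; exact const y 2 hy h2
      · rw [← hφ2, h2]
      · rw [← hφ2]; exact (const 2 y (by norm_num) h2).symm
    have hrw : (y-1) ^ (c-1) = ((y-1) ^ (1-c))⁻¹ := by
      rw [show c-1 = -(1-c) by ring, Real.rpow_neg hy1.le]
    have hne : y * (y-1) ^ (1-c) ≠ 0 := by positivity
    rw [hφ] at hφy
    simp only at hφy
    rw [hKdef, hrw]
    field_simp at hφy ⊢
    nlinarith [hφy, Real.rpow_pos_of_pos hy1 (1-c)]
  -- Step 2: the primitive of the beta integrand
  set f : ℝ → ℝ := fun z => (1 - z) ^ (c - 1) * z ^ (-c) with hf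
  set F : ℝ → ℝ := fun b => ∫ z in (0:ℝ)..b, f z with hF
  have hfi : IntervalIntegrable f volume 0 1 := beta_integrable hc0 hc1
  have hfi' : ∀ b ∈ Set.Icc (0:ℝ) 1, IntervalIntegrable f volume 0 b := by
    intro b hb
    refine hfi.mono_set ?_
    rw [Set.uIcc_of_le hb.1, Set.uIcc_of_le (by norm_num : (0:ℝ) ≤ 1)]
    exact Set.Icc_subset_Icc le_rfl hb.2
  have hFcont : ContinuousOn F (Set.Icc 0 1) := by
    have h01 : Set.uIcc (0:ℝ) 1 = Set.Icc 0 1 := Set.uIcc_of_le (by norm_num)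
    have := intervalIntegral.continuousOn_primitive_interval (a := (0:ℝ)) (b := 1)
      (μ := volume) (f := f) (by rw [h01]; exact (integrableOn_Icc_iff_integrableOn_Ioc).mpr hfi.1)
    rwa [h01] at this
  have hfc : ContinuousOn f (Set.Ioo 0 1) := by
    apply ContinuousOn.mul
    · refine (continuousOn_const.sub continuousOn_id).rpow_const fun x hx => Or.inl ?_
      simp only [Pi.sub_apply, id]; intro hh; nlinarith [hx.2]
    · refine continuousOn_id.rpow_const fun x hx => Or.inl ?_
      simp only [id]; exact ne_of_gt hx.1
  have hFd : ∀ b ∈ Set.Ioo (0:ℝ) 1, HasDerivAt F (f b) b := by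
    intro b hb
    refine intervalIntegral.integral_hasDerivAt_right (hfi' b ⟨hb.1.le, hb.2.le⟩) ?_ ?_
    · exact (hfc.stronglyMeasurableAtFilter isOpen_Ioo b hb)
    · exact hfc.continuousAt (isOpen_Ioo.mem_nhds hb)
  have hGd : ∀ x ∈ Set.Ioi (1:ℝ), HasDerivAt (fun x => F (1/x)) (-((x-1) ^ (c-1) / x)) x := by
    intro x hx
    rw [Set.mem_Ioi] at hx
    have hx0 : (0:ℝ) < x := by linarith
    have hmem : 1/x ∈ Set.Ioo (0:ℝ) 1 := by
      constructor
      · positivity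
      · rw [div_lt_one hx0]; linarith
    have hinv : HasDerivAt (fun x : ℝ => 1/x) (-(x^2)⁻¹) x := by
      simpa [one_div] using (hasDerivAt_inv hx0.ne')
    have : HasDerivAt (fun x => F (1/x)) (f (1/x) * -(x^2)⁻¹) x := (hFd (1/x) hmem).comp x hinv
    convert this using 1
    have hx1 : (0:ℝ) < x - 1 := by linarith
    have e1 : (1 - 1/x) = (x-1)/x := by field_simp
    have e2 : ((x-1)/x) ^ (c-1) = (x-1) ^ (c-1) / x ^ (c-1) :=
      Real.div_rpow hx1.le hx0.le (c-1)
    have e3 : (1/x) ^ (-c) = x ^ c := by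
      rw [one_div, Real.inv_rpow hx0.le, Real.rpow_neg hx0.le, inv_inv]
    have e4 : x ^ (c-1) = x ^ c / x := by
      rw [Real.rpow_sub hx0, Real.rpow_one]
    simp only [hf, e1, e2, e3, e4]
    have hxc : (0:ℝ) < x ^ c := Real.rpow_pos_of_pos hx0 c
    field_simp
  -- Step 3: ψ = h + K · F(1/·) is constant on (1, ∞)
  set ψ : ℝ → ℝ := fun x => h x + K * F (1/x) with hψ
  have hψd : ∀ x ∈ Set.Ioi (1:ℝ), HasDerivAt ψ 0 x := by
    intro x hx
    have := (hderiv x hx).add (((hGd x hx).const_mul K))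
    have hz : h' x + K * -((x-1) ^ (c-1) / x) = 0 := by
      rw [hK x hx]; ring
    exact hz ▸ this
  have constψ : ∀ a b : ℝ, 1 < a → a < b → ψ a = ψ b := by
    intro a b ha hab
    obtain ⟨ξ, hξ, hs⟩ := exists_hasDerivAt_eq_slope ψ (fun _ => 0) hab
      (fun t ht => (hψd t (lt_of_lt_of_le ha ht.1)).continuousAt.continuousWithinAt)
      (fun t ht => hψd t (ha.trans ht.1))
    have hba : b - a ≠ 0 := by linarith
    field_simp at hs
    linarith
  have hψeq : ∀ x ∈ Set.Ioi (1:ℝ), ψ x = ψ 2 := by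
    intro x hx
    rw [Set.mem_Ioi] at hx
    rcases lt_trichotomy x 2 with h2 | h2 | h2
    · exact constψ x 2 hx h2
    · rw [h2]
    · exact (constψ 2 x (by norm_num) h2).symm
  -- Step 4: limit at infinity gives ψ ≡ 0
  have hF0 : F 0 = 0 := intervalIntegral.integral_same
  have htop1 : Tendsto (fun x:ℝ => 1/x) atTop (nhdsWithin 0 (Set.Icc (0:ℝ) 1)) := by
    rw [tendsto_nhdsWithin_iff]
    constructor
    · simpa [one_div] using tendsto_inv_atTop_zero
    · filter_upwards [eventually_ge_atTop (1:ℝ)] with x hx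
      have hx0 : (0:ℝ) < x := by linarith
      exact ⟨by positivity, by rw [div_le_one hx0]; linarith⟩
  have hGtop : Tendsto (fun x:ℝ => F (1/x)) atTop (nhds 0) := by
    have hcw := hFcont 0 ⟨le_rfl, by norm_num⟩
    have := hcw.tendsto.comp htop1
    rwa [hF0] at this
  have hψtop : Tendsto ψ atTop (nhds (0 + K * 0)) := hlim.add (hGtop.const_mul K)
  have hψ2 : ψ 2 = 0 := by
    have h1 : Tendsto ψ atTop (nhds (ψ 2)) := by
      refine Tendsto.congr' ?_ tendsto_const_nhds
      filter_upwards [eventually_gt_atTop (1:ℝ)] with x hx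
      exact (hψeq x hx).symm
    have := tendsto_nhds_unique h1 hψtop
    rw [this]; ring
  -- Step 5: limit at 1⁺ identifies K
  have hone : Tendsto (fun x:ℝ => 1/x) (nhdsWithin 1 (Set.Ioi 1))
      (nhdsWithin 1 (Set.Icc (0:ℝ) 1)) := by
    rw [tendsto_nhdsWithin_iff]
    constructor
    · have hcont1 : ContinuousAt (fun x:ℝ => 1/x) 1 :=
        continuousAt_const.div continuousAt_id (by norm_num)
      have : Tendsto (fun x:ℝ => 1/x) (nhds 1) (nhds 1) := by
        simpa using hcont1.tendsto
      exact this.mono_left nhdsWithin_le_nhds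
    · filter_upwards [self_mem_nhdsWithin] with x hx
      rw [Set.mem_Ioi] at hx
      have hx0 : (0:ℝ) < x := by linarith
      exact ⟨by positivity, by rw [div_le_one hx0]; linarith⟩
  have hG1 : Tendsto (fun x:ℝ => F (1/x)) (nhdsWithin 1 (Set.Ioi 1)) (nhds (F 1)) :=
    (hFcont 1 ⟨by norm_num, le_rfl⟩).tendsto.comp hone
  have hh1 : Tendsto h (nhdsWithin 1 (Set.Ioi 1)) (nhds 1) := by
    have := (hcont 1 Set.self_mem_Ici).tendsto
    rw [hinit] at this
    exact this.mono_left (nhdsWithin_mono 1 Set.Ioi_subset_Ici_self)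
  have hψ1 : Tendsto ψ (nhdsWithin 1 (Set.Ioi 1)) (nhds (1 + K * F 1)) :=
    hh1.add (hG1.const_mul K)
  have hψ1' : Tendsto ψ (nhdsWithin 1 (Set.Ioi 1)) (nhds 0) := by
    refine Tendsto.congr' ?_ tendsto_const_nhds
    filter_upwards [self_mem_nhdsWithin] with x hx
    rw [hψeq x hx, hψ2]
  have hKB : 1 + K * F 1 = 0 := tendsto_nhds_unique hψ1 hψ1'
  set B : ℝ := Real.Gamma c * Real.Gamma (1 - c) with hB
  have hF1 : F 1 = B := beta_value hc0 hc1
  have hBpos : 0 < B :=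
    mul_pos (Real.Gamma_pos_of_pos hc0) (Real.Gamma_pos_of_pos (by linarith))
  have hKval : K = -(1/B) := by
    rw [hF1] at hKB
    field_simp
    linarith
  -- Step 6: conclusion
  have hset : ∀ b:ℝ, 0 ≤ b → ∫ z in Set.Ioo (0:ℝ) b, f z = F b := by
    intro b hb
    rw [hF]
    simp only
    rw [intervalIntegral.integral_of_le hb, MeasureTheory.integral_Ioc_eq_integral_Ioo]
  intro x hx
  rcases eq_or_lt_of_le hx with hx1 | hx1
  · rw [← hx1]
    norm_num
    rw [hset 1 (by norm_num), hF1, hinit]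
    field_simp
  · have hx0 : (0:ℝ) < x := by linarith
    rw [hset (1/x) (by positivity)]
    have hz : ψ x = 0 := by rw [hψeq x hx1, hψ2]
    rw [hψ] at hz
    simp only at hz
    rw [hKval] at hz
    have hBne : B ≠ 0 := hBpos.ne'
    field_simp at hz ⊢
    linarith
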